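/- Given λ_Z·ā_ZZ₂ = λ_Z·ā_Z + 2λ_{P[hor]}·ā_{P[hor]} with λ_Z = λ'_Z·ρ̄_Z > 0, λ_Z·ā_Z = 2λ_P·ā_P = 2(λ'_Z·γ̄_Z + λ'_E·ℓ̄'_E), λ_{P[hor]}·ā_{P[hor]} = λ'_Z·γ̄_Z, and λ'_E = λ'_Z·μ'_VE/(μ'_VE − 2), one obtains ā_ZZ₂ = (2/ρ̄_Z)·(2γ̄_Z + μ'_VE·ℓ̄'_E/(μ'_VE − 2)). -/

import Mathlib

theorem stmt17 (lamZ aZZ2 aZ lamPhor aPhor lamP aP lam'Z lam'E μVE ρZ γZ ℓ'E : ℝ)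
    (h1 : lamZ * aZZ2 = lamZ * aZ + 2 * (lamPhor * aPhor))
    (hlamZ : lamZ = lam'Z * ρZ) (hlamZpos : 0 < lamZ)
    (haZ : lamZ * aZ = 2 * (lamP * aP))
    (haZ' : lamP * aP = lam'Z * γZ + lam'E * ℓ'E)
    (hPhor : lamPhor * aPhor = lam'Z * γZ)
    (hE : lam'E = lam'Z * μVE / (μVE - 2)) :
    aZZ2 = (2 / ρZ) * (2 * γZ + μVE * ℓ'E / (μVE - 2)) := by
  have hne : lamZ ≠ 0 := ne_of_gt hlamZpos
  have h' : lam'Z ≠ 0 := by rintro rfl; simp at hlamZ; exact hne hlamZ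
  have hρ : ρZ ≠ 0 := by rintro rfl; simp at hlamZ; exact hne hlamZ
  by_cases hμ : μVE - 2 = 0
  · rw [hμ, div_zero] at hE
    rw [hμ, div_zero]
    subst hE hlamZ
    have := h1
    rw [haZ, haZ', hPhor] at this
    field_simp at this ⊢
    have key : lam'Z * (aZZ2 * ρZ) = lam'Z * (2 * (2 * γZ)) := by linear_combination this
    have := mul_left_cancel₀ h' key
    linarith
  · subst hE hlamZ
    rw [haZ, haZ', hPhor] at h1
    field_simp at h1 ⊢
    have key : lam'Z * (aZZ2 * (ρZ * (μVE - 2))) =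
        lam'Z * (2 * (2 * γZ * (μVE - 2) + μVE * ℓ'E)) := by linear_combination lam'Z * h1
    have := mul_left_cancel₀ h' key
    linarith
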